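/- The level three Appell function satisfies the translation identity A₃(u, v+τ; τ) = e^{-2πiu} A₃(u, v; τ) + i e^{πiu - πiv - 3πiτ/4} θ(v; 3τ), for u, v ∈ ℂ and τ in the upper half-plane (with u avoiding the poles u ∈ ℤτ + ℤ). -/

import Mathlib

open Complex

/-- The Jacobi theta function `θ(u; τ) = ∑_{ν ∈ 1/2 + ℤ} e^{πiν²τ + 2πiν(u + 1/2)}`. -/
noncomputable def jTheta (u τ : ℂ) : ℂ :=
  ∑' n : ℤ, Complex.exp ((Real.pi : ℂ) * I * ((n : ℂ) + 1 / 2) ^ 2 * τ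
    + 2 * (Real.pi : ℂ) * I * ((n : ℂ) + 1 / 2) * (u + 1 / 2))

/-- The level three Appell function
`A₃(u, v; τ) = e^{3πiu} ∑_{n ∈ ℤ} (-1)^n q^{3n(n+1)/2} e^{2πivn} / (1 - e^{2πiu} q^n)`,
with `q = e^{2πiτ}`. -/
noncomputable def appellA3 (u v τ : ℂ) : ℂ :=
  Complex.exp (3 * (Real.pi : ℂ) * I * u) *
    ∑' n : ℤ, ((-1 : ℂ) ^ n
        * Complex.exp (3 * (Real.pi : ℂ) * I * τ * (n : ℂ) * ((n : ℂ) + 1))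
        * Complex.exp (2 * (Real.pi : ℂ) * I * v * (n : ℂ)))
      / (1 - Complex.exp (2 * (Real.pi : ℂ) * I * u) * Complex.exp (2 * (Real.pi : ℂ) * I * τ * (n : ℂ)))

/-- Numerator of the Appell series. -/
noncomputable def A3a (v τ : ℂ) (n : ℤ) : ℂ :=
  (-1 : ℂ) ^ n * Complex.exp (3 * (Real.pi : ℂ) * I * τ * (n : ℂ) * ((n : ℂ) + 1))
    * Complex.exp (2 * (Real.pi : ℂ) * I * v * (n : ℂ))

/-- Denominator of the Appell series. -/
noncomputable def A3b (u τ : ℂ) (n : ℤ) : ℂ :=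
  1 - Complex.exp (2 * (Real.pi : ℂ) * I * u) * Complex.exp (2 * (Real.pi : ℂ) * I * τ * (n : ℂ))

lemma appellA3_eq (u v τ : ℂ) :
    appellA3 u v τ = Complex.exp (3 * (Real.pi : ℂ) * I * u) *
      ∑' n : ℤ, A3a v τ n / A3b u τ n := rfl

lemma neg_one_zpow_eq (n : ℤ) :
    ((-1 : ℂ) ^ n) = Complex.exp ((Real.pi : ℂ) * I * (n : ℂ)) := by
  rw [show (Real.pi : ℂ) * I * (n : ℂ) = (n : ℂ) * ((Real.pi : ℂ) * I) by ring,
    Complex.exp_int_mul, Complex.exp_pi_mul_I]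

lemma A3a_eq_jacobi (v τ : ℂ) (n : ℤ) :
    A3a v τ n = jacobiTheta₂_term n (v + (1 + 3 * τ) / 2) (3 * τ) := by
  rw [A3a, jacobiTheta₂_term, neg_one_zpow_eq, ← Complex.exp_add, ← Complex.exp_add]
  congr 1
  ring

lemma summable_A3a (v τ : ℂ) (hτ : 0 < τ.im) : Summable (A3a v τ) := by
  have : Summable (jacobiTheta₂_term · (v + (1 + 3 * τ) / 2) (3 * τ)) := by
    rw [summable_jacobiTheta₂_term_iff]
    simp only [Complex.mul_im]
    norm_num
    linarith
  exact this.congr fun n => (A3a_eq_jacobi v τ n).symm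

lemma norm_exp_int (τ : ℂ) (n : ℤ) :
    ‖Complex.exp (2 * (Real.pi : ℂ) * I * τ * (n : ℂ))‖
      = Real.exp (-(2 * Real.pi * τ.im) * (n : ℝ)) := by
  rw [Complex.norm_exp]
  congr 1
  simp [Complex.mul_re, Complex.mul_im]

/-- Uniform bound for the inverse denominators. -/
lemma A3b_inv_bdd (u τ : ℂ) (hτ : 0 < τ.im)
    (hu : ∀ n : ℤ, Complex.exp (2 * (Real.pi : ℂ) * I * u)
      * Complex.exp (2 * (Real.pi : ℂ) * I * τ * (n : ℂ)) ≠ 1) :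
    ∃ C : ℝ, ∀ n : ℤ, ‖(A3b u τ n)⁻¹‖ ≤ C := by
  set z : ℂ := Complex.exp (2 * (Real.pi : ℂ) * I * u) with hz
  have hzpos : 0 < ‖z‖ := norm_pos_iff.mpr (Complex.exp_ne_zero _)
  set c : ℝ := 2 * Real.pi * τ.im with hc
  have hcpos : 0 < c := by positivity
  -- along atTop the denominators tend to 1
  have hmul_top : Filter.Tendsto (fun n : ℤ => c * (n : ℝ)) Filter.atTop Filter.atTop :=
    (tendsto_intCast_atTop_atTop).const_mul_atTop hcpos
  have hexp_top : Filter.Tendsto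
      (fun n : ℤ => Real.exp (-(2 * Real.pi * τ.im) * (n : ℝ))) Filter.atTop (nhds 0) := by
    refine (Real.tendsto_exp_atBot.comp ?_)
    refine (Filter.tendsto_neg_atTop_atBot.comp hmul_top).congr fun n => ?_
    show -(c * (n : ℝ)) = -(2 * Real.pi * τ.im) * (n : ℝ)
    rw [hc]; ring
  have hQ0 : Filter.Tendsto (fun n : ℤ => Complex.exp (2 * (Real.pi : ℂ) * I * τ * (n : ℂ)))
      Filter.atTop (nhds 0) := by
    rw [tendsto_zero_iff_norm_tendsto_zero]
    exact hexp_top.congr fun n => (norm_exp_int τ n).symm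
  have hbtop : Filter.Tendsto (fun n : ℤ => A3b u τ n) Filter.atTop (nhds 1) := by
    have h1 : Filter.Tendsto (fun n : ℤ =>
        z * Complex.exp (2 * (Real.pi : ℂ) * I * τ * (n : ℂ))) Filter.atTop (nhds 0) := by
      simpa using hQ0.const_mul z
    have h2 := h1.const_sub (1 : ℂ)
    simp only [A3b, ← hz]
    simpa using h2
  have hinvtop : Filter.Tendsto (fun n : ℤ => ‖(A3b u τ n)⁻¹‖) Filter.atTop (nhds 1) := by
    have := ((hbtop.inv₀ one_ne_zero).norm)
    simpa using this
  -- along atBot the denominators tend to infinity in norm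
  have hmul_bot : Filter.Tendsto (fun n : ℤ => -(c * (n : ℝ))) Filter.atBot Filter.atTop := by
    refine Filter.tendsto_neg_atBot_atTop.comp ?_
    exact (tendsto_intCast_atBot_iff.mpr Filter.tendsto_id).const_mul_atBot hcpos
  have hexp_bot : Filter.Tendsto
      (fun n : ℤ => Real.exp (-(2 * Real.pi * τ.im) * (n : ℝ))) Filter.atBot Filter.atTop := by
    refine Real.tendsto_exp_atTop.comp (hmul_bot.congr fun n => ?_)
    show -(c * (n : ℝ)) = -(2 * Real.pi * τ.im) * (n : ℝ)
    rw [hc]; ring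
  have hgrow : Filter.Tendsto
      (fun n : ℤ => ‖z‖ * Real.exp (-(2 * Real.pi * τ.im) * (n : ℝ)) - 1)
      Filter.atBot Filter.atTop := by
    refine (Filter.tendsto_atTop_add_const_right _ (-1)
      (hexp_bot.const_mul_atTop hzpos)).congr fun n => by ring
  have hbbot : Filter.Tendsto (fun n : ℤ => ‖A3b u τ n‖) Filter.atBot Filter.atTop := by
    refine Filter.tendsto_atTop_mono (fun n => ?_) hgrow
    have h1 : ‖z * Complex.exp (2 * (Real.pi : ℂ) * I * τ * (n : ℂ))‖ - ‖(1 : ℂ)‖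
        ≤ ‖z * Complex.exp (2 * (Real.pi : ℂ) * I * τ * (n : ℂ)) - 1‖ :=
      norm_sub_norm_le _ _
    rw [norm_mul, norm_exp_int τ n, norm_one] at h1
    calc ‖z‖ * Real.exp (-(2 * Real.pi * τ.im) * (n : ℝ)) - 1
        ≤ ‖z * Complex.exp (2 * (Real.pi : ℂ) * I * τ * (n : ℂ)) - 1‖ := h1
      _ = ‖A3b u τ n‖ := by rw [A3b, norm_sub_rev]
  have hinvbot : Filter.Tendsto (fun n : ℤ => ‖(A3b u τ n)⁻¹‖) Filter.atBot (nhds 0) := by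
    simp only [norm_inv]
    exact hbbot.inv_tendsto_atTop
  -- combine into a cofinite bound, hence a global bound
  obtain ⟨C1, hC1⟩ := hinvbot.isBoundedUnder_le
  obtain ⟨C2, hC2⟩ := hinvtop.isBoundedUnder_le
  rw [Filter.eventually_map] at hC1 hC2
  have hcof : Filter.IsBoundedUnder (· ≤ ·) (Filter.cofinite : Filter ℤ)
      (fun n : ℤ => ‖(A3b u τ n)⁻¹‖) := by
    refine ⟨max C1 C2, ?_⟩
    rw [Filter.eventually_map, Int.cofinite_eq, Filter.eventually_sup]
    exact ⟨hC1.mono fun n h => le_trans h (le_max_left _ _),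
      hC2.mono fun n h => le_trans h (le_max_right _ _)⟩
  obtain ⟨C, hC⟩ := hcof.bddAbove_range_of_cofinite
  exact ⟨C, fun n => hC (Set.mem_range_self n)⟩

/-- `A₃(u, v+τ; τ) = e^{-2πiu} A₃(u, v; τ) + i e^{πiu - πiv - 3πiτ/4} θ(v; 3τ)`. -/
theorem appellA3_translate (u v τ : ℂ) (hτ : 0 < τ.im)
    (hu : ∀ n : ℤ, Complex.exp (2 * (Real.pi : ℂ) * I * u)
      * Complex.exp (2 * (Real.pi : ℂ) * I * τ * (n : ℂ)) ≠ 1) :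
    appellA3 u (v + τ) τ
      = Complex.exp (-(2 * (Real.pi : ℂ) * I * u)) * appellA3 u v τ
        + I * Complex.exp ((Real.pi : ℂ) * I * u - (Real.pi : ℂ) * I * v
            - 3 * (Real.pi : ℂ) * I * τ / 4) * jTheta v (3 * τ) := by
  set z : ℂ := Complex.exp (2 * (Real.pi : ℂ) * I * u) with hz
  have hzne : z ≠ 0 := Complex.exp_ne_zero _
  have hbne : ∀ n : ℤ, A3b u τ n ≠ 0 := fun n => sub_ne_zero.mpr (Ne.symm (hu n))
  have hsa : Summable (A3a v τ) := summable_A3a v τ hτ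
  obtain ⟨C, hC⟩ := A3b_inv_bdd u τ hτ hu
  have hs1 : Summable (fun n : ℤ => A3a v τ n / A3b u τ n) := by
    refine Summable.of_norm_bounded (g := fun n => ‖A3a v τ n‖ * C) (hsa.norm.mul_right C) fun n => ?_
    rw [div_eq_mul_inv, norm_mul]
    exact mul_le_mul_of_nonneg_left (hC n) (norm_nonneg _)
  -- termwise identity for the shifted series
  have key : ∀ n : ℤ, A3a (v + τ) τ n / A3b u τ n
      = z⁻¹ * (A3a v τ n / A3b u τ n) - z⁻¹ * A3a v τ n := by
    intro n
    have hnum : A3a (v + τ) τ n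
        = A3a v τ n * Complex.exp (2 * (Real.pi : ℂ) * I * τ * (n : ℂ)) := by
      rw [A3a, A3a]
      simp only [mul_assoc, ← Complex.exp_add]
      congr 2
      ring
    rw [hnum]
    have hb := hbne n
    rw [A3b, ← hz] at hb ⊢
    generalize Complex.exp (2 * (Real.pi : ℂ) * I * τ * (n : ℂ)) = w at hb ⊢
    have hb' : 1 - w * z ≠ 0 := by rwa [mul_comm]
    field_simp
    ring
  -- the theta series, termwise
  have hI : I = Complex.exp (((Real.pi : ℂ) / 2) * I) := by
    rw [Complex.exp_mul_I, Complex.cos_pi_div_two, Complex.sin_pi_div_two]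
    ring
  have theta_term : ∀ n : ℤ,
      Complex.exp ((Real.pi : ℂ) * I * ((n : ℂ) + 1 / 2) ^ 2 * (3 * τ)
        + 2 * (Real.pi : ℂ) * I * ((n : ℂ) + 1 / 2) * (v + 1 / 2))
      = I * Complex.exp ((Real.pi : ℂ) * I * v + 3 * (Real.pi : ℂ) * I * τ / 4)
          * A3a v τ n := by
    intro n
    have hcomb : ∀ P Q R S : ℂ, I * Complex.exp P
        * (Complex.exp Q * Complex.exp R * Complex.exp S)
        = Complex.exp ((Real.pi : ℂ) / 2 * I + P + Q + R + S) := by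
      intro P Q R S
      rw [Complex.exp_add, Complex.exp_add, Complex.exp_add, Complex.exp_add, ← hI]
      ring
    rw [A3a, neg_one_zpow_eq, hcomb]
    congr 1
    ring
  have htheta : jTheta v (3 * τ)
      = I * Complex.exp ((Real.pi : ℂ) * I * v + 3 * (Real.pi : ℂ) * I * τ / 4)
          * ∑' n : ℤ, A3a v τ n := by
    rw [jTheta, tsum_congr theta_term, tsum_mul_left]
  -- put everything together
  rw [appellA3_eq u (v + τ) τ, appellA3_eq u v τ, htheta, tsum_congr key,
    Summable.tsum_sub (hs1.mul_left _) (hsa.mul_left _), tsum_mul_left, tsum_mul_left]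
  set S1 : ℂ := ∑' n : ℤ, A3a v τ n / A3b u τ n
  set S0 : ℂ := ∑' n : ℤ, A3a v τ n
  have hzinv : z⁻¹ = Complex.exp (-(2 * (Real.pi : ℂ) * I * u)) := by
    rw [hz, ← Complex.exp_neg]
  have e1 : Complex.exp (3 * (Real.pi : ℂ) * I * u)
      * Complex.exp (-(2 * (Real.pi : ℂ) * I * u)) = Complex.exp ((Real.pi : ℂ) * I * u) := by
    rw [← Complex.exp_add]; congr 1; ring
  have e2 : Complex.exp ((Real.pi : ℂ) * I * u - (Real.pi : ℂ) * I * v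
        - 3 * (Real.pi : ℂ) * I * τ / 4)
      * Complex.exp ((Real.pi : ℂ) * I * v + 3 * (Real.pi : ℂ) * I * τ / 4)
      = Complex.exp ((Real.pi : ℂ) * I * u) := by
    rw [← Complex.exp_add]; congr 1; ring
  rw [hzinv]
  linear_combination (-S0) * e1 + S0 * e2
    - Complex.exp ((Real.pi : ℂ) * I * v + 3 * (Real.pi : ℂ) * I * τ / 4)
      * Complex.exp ((Real.pi : ℂ) * I * u - (Real.pi : ℂ) * I * v
        - 3 * (Real.pi : ℂ) * I * τ / 4) * S0 * Complex.I_mul_I
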